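/- Let n ≥ 1, d ≥ 1, let O be a d×d real orthogonal matrix, let G_O be the rotated hypercubic grid, let q ∈ [1,∞] with Hölder conjugate q', and let δ > 0. Then the number of points x ∈ G_O with ‖x‖_{q'} ≥ d^{1−1/q}·√(ln(2d/δ)/2) is at most δ·2^{nd}. (Equivalently, the approximate radius r_{G_O,δ}(q) is at most d^{1−1/q}·√(ln(2d/δ)/2).) -/

import Mathlib

open scoped ENNReal Classical BigOperators

/-- The `ℓ_q`-norm of a vector in `ℝ^d`, for `q ∈ [1,∞]`. -/
noncomputable def lqNorm {d : ℕ} (q : ℝ≥0∞) (v : Fin d → ℝ) : ℝ :=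
  if q = ∞ then ⨆ j, |v j| else (∑ j, |v j| ^ q.toReal) ^ (1 / q.toReal)

/-- A real square matrix is orthogonal if `OᵀO = OOᵀ = I`. -/
def IsOrthogonalMat {d : ℕ} (O : Matrix (Fin d) (Fin d) ℝ) : Prop :=
  O.transpose * O = 1 ∧ O * O.transpose = 1

/-- The point of the rotated hypercubic grid `G_O` indexed by `k ∈ {0,…,2ⁿ-1}^d`,
namely `Oᵀx/2ⁿ` with `x_i = k_i + 1/2 - 2^{n-1}`. -/
noncomputable def gridPoint (n d : ℕ) (O : Matrix (Fin d) (Fin d) ℝ)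
    (k : Fin d → Fin (2 ^ n)) : Fin d → ℝ :=
  fun j => (∑ i, O i j * ((k i : ℝ) + 1 / 2 - 2 ^ n / 2)) / 2 ^ n

/-- The rotated hypercubic grid `G_O = {Oᵀx/2ⁿ : x ∈ {−2^{n−1}+1/2, …, 2^{n−1}−1/2}^d}`. -/
noncomputable def rotGrid (n d : ℕ) (O : Matrix (Fin d) (Fin d) ℝ) : Finset (Fin d → ℝ) :=
  Finset.univ.image (gridPoint n d O)

open Finset Real

noncomputable def epsGP (N : ℕ) (m : Fin N) : ℝ := ((m : ℝ) + 1 / 2 - N / 2) / N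

lemma epsGP_abs_le {N : ℕ} (hN : 0 < N) (m : Fin N) : |epsGP N m| ≤ 1 / 2 := by
  have hm : (m : ℝ) ≤ N - 1 := by
    have := m.isLt
    have : (m : ℝ) + 1 ≤ N := by exact_mod_cast this
    linarith
  have hm0 : (0 : ℝ) ≤ m := Nat.cast_nonneg _
  have hNR : (0 : ℝ) < N := by exact_mod_cast hN
  rw [epsGP, abs_div, abs_of_pos hNR, div_le_iff₀ hNR]
  rw [abs_le]
  constructor <;> nlinarith

lemma epsGP_rev {N : ℕ} (m : Fin N) : epsGP N m.rev = - epsGP N m := by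
  have h1 : (m.rev : ℕ) = N - (m + 1) := Fin.val_rev m
  have h2 : ((m.rev : ℕ) : ℝ) = N - (m + 1) := by
    rw [h1]; push_cast [Nat.cast_sub m.isLt]; ring
  simp only [epsGP, h2]
  ring

/-- One-coordinate MGF bound (Hoeffding's lemma, symmetric discrete version). -/
lemma epsGP_mgf {N : ℕ} (hN : 0 < N) (c : ℝ) :
    ∑ m : Fin N, Real.exp (c * epsGP N m) ≤ N * Real.exp (c ^ 2 / 8) := by
  have hsym : ∑ m : Fin N, Real.exp (c * epsGP N m)
      = ∑ m : Fin N, Real.exp (- (c * epsGP N m)) := by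
    rw [← Equiv.sum_comp (Fin.revPerm) (fun m => Real.exp (- (c * epsGP N m)))]
    apply Finset.sum_congr rfl
    intro m _
    simp [Fin.revPerm, epsGP_rev]
  have hcosh : ∑ m : Fin N, Real.exp (c * epsGP N m)
      = ∑ m : Fin N, Real.cosh (c * epsGP N m) := by
    have := hsym
    simp only [Real.cosh_eq]
    rw [← Finset.sum_div]
    rw [Finset.sum_add_distrib]
    rw [← hsym]
    ring
  rw [hcosh]
  calc ∑ m : Fin N, Real.cosh (c * epsGP N m)
      ≤ ∑ m : Fin N, Real.exp (c ^ 2 / 8) := by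
        apply Finset.sum_le_sum
        intro m _
        refine (Real.cosh_le_exp_half_sq _).trans (Real.exp_le_exp.2 ?_)
        have h := epsGP_abs_le hN m
        have h2 : (epsGP N m) ^ 2 ≤ (1/2) ^ 2 := by
          rw [← sq_abs]; exact pow_le_pow_left₀ (abs_nonneg _) h 2
        nlinarith [sq_nonneg c]
    _ = N * Real.exp (c ^ 2 / 8) := by simp [mul_comm]

/-- MGF bound for a linear combination with coefficient vector of sq-norm ≤ 1. -/
lemma mgf_linear {d N : ℕ} (hN : 0 < N) (a : Fin d → ℝ) (ha : ∑ i, a i ^ 2 ≤ 1) (c : ℝ) :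
    ∑ k : Fin d → Fin N, Real.exp (c * ∑ i, a i * epsGP N (k i))
      ≤ (N : ℝ) ^ d * Real.exp (c ^ 2 / 8) := by
  have key : ∑ k : Fin d → Fin N, Real.exp (c * ∑ i, a i * epsGP N (k i))
      = ∏ i : Fin d, ∑ m : Fin N, Real.exp (c * a i * epsGP N m) := by
    rw [Finset.prod_univ_sum]
    rw [Fintype.piFinset_univ]
    apply Finset.sum_congr rfl
    intro k _
    rw [← Real.exp_sum, Finset.mul_sum]
    congr 1
    apply Finset.sum_congr rfl
    intro i _
    ring
  rw [key]
  calc ∏ i : Fin d, ∑ m : Fin N, Real.exp (c * a i * epsGP N m)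
      ≤ ∏ i : Fin d, ((N : ℝ) * Real.exp ((c * a i) ^ 2 / 8)) := by
        apply Finset.prod_le_prod
        · intro i _; positivity
        · intro i _; exact epsGP_mgf hN (c * a i)
    _ = (N : ℝ) ^ d * Real.exp (∑ i, (c * a i) ^ 2 / 8) := by
        rw [Finset.prod_mul_distrib, Real.exp_sum]
        simp
    _ ≤ (N : ℝ) ^ d * Real.exp (c ^ 2 / 8) := by
        apply mul_le_mul_of_nonneg_left _ (by positivity)
        apply Real.exp_le_exp.2
        have : ∑ i, (c * a i) ^ 2 / 8 = c ^ 2 / 8 * ∑ i, a i ^ 2 := by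
          rw [Finset.mul_sum]; apply Finset.sum_congr rfl; intro i _; ring
        rw [this]
        nlinarith [sq_nonneg c]

/-- Chernoff counting. -/
lemma chernoff_count {K : Type*} [Fintype K] (f : K → ℝ) (t c : ℝ) (hc : 0 ≤ c) :
    ((Finset.univ.filter fun k => t ≤ f k).card : ℝ) * Real.exp (c * t)
      ≤ ∑ k : K, Real.exp (c * f k) := by
  classical
  calc ((Finset.univ.filter fun k => t ≤ f k).card : ℝ) * Real.exp (c * t)
      = ∑ _k ∈ Finset.univ.filter fun k => t ≤ f k, Real.exp (c * t) := by
        rw [Finset.sum_const, nsmul_eq_mul]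
    _ ≤ ∑ k ∈ Finset.univ.filter fun k => t ≤ f k, Real.exp (c * f k) := by
        apply Finset.sum_le_sum
        intro k hk
        exact Real.exp_le_exp.2 (mul_le_mul_of_nonneg_left (Finset.mem_filter.1 hk).2 hc)
    _ ≤ ∑ k : K, Real.exp (c * f k) := by
        apply Finset.sum_le_sum_of_subset_of_nonneg (Finset.filter_subset _ _)
        intro k _ _; positivity

lemma tail_one {d N : ℕ} (hN : 0 < N) (a : Fin d → ℝ) (ha : ∑ i, a i ^ 2 ≤ 1)
    (t : ℝ) (ht : 0 ≤ t) :
    ((Finset.univ.filter fun k : Fin d → Fin N =>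
        t ≤ ∑ i, a i * epsGP N (k i)).card : ℝ) ≤ (N : ℝ) ^ d * Real.exp (-2 * t ^ 2) := by
  have h1 := chernoff_count (fun k : Fin d → Fin N => ∑ i, a i * epsGP N (k i)) t (4 * t)
    (by positivity)
  have h2 := mgf_linear hN a ha (4 * t)
  have h3 := h1.trans h2
  rw [← le_div_iff₀ (Real.exp_pos _)] at h3
  refine h3.trans (le_of_eq ?_)
  rw [mul_div_assoc, ← Real.exp_sub]
  congr 1
  ring

lemma tail_abs {d N : ℕ} (hN : 0 < N) (a : Fin d → ℝ) (ha : ∑ i, a i ^ 2 ≤ 1)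
    (t : ℝ) (ht : 0 ≤ t) :
    ((Finset.univ.filter fun k : Fin d → Fin N =>
        t ≤ |∑ i, a i * epsGP N (k i)|).card : ℝ)
      ≤ 2 * (N : ℝ) ^ d * Real.exp (-2 * t ^ 2) := by
  classical
  have hsub : (Finset.univ.filter fun k : Fin d → Fin N =>
        t ≤ |∑ i, a i * epsGP N (k i)|)
      ⊆ (Finset.univ.filter fun k : Fin d → Fin N => t ≤ ∑ i, a i * epsGP N (k i))
        ∪ (Finset.univ.filter fun k : Fin d → Fin N => t ≤ ∑ i, (-a) i * epsGP N (k i)) := by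
    intro k hk
    rw [Finset.mem_filter] at hk
    rcases le_abs.1 hk.2 with h | h
    · exact Finset.mem_union_left _ (Finset.mem_filter.2 ⟨Finset.mem_univ _, h⟩)
    · refine Finset.mem_union_right _ (Finset.mem_filter.2 ⟨Finset.mem_univ _, ?_⟩)
      calc t ≤ -∑ i, a i * epsGP N (k i) := h
        _ = ∑ i, (-a) i * epsGP N (k i) := by
            rw [← Finset.sum_neg_distrib]
            exact Finset.sum_congr rfl fun i _ => by simp [neg_mul]
  have hna : ∑ i, (-a) i ^ 2 ≤ 1 := by simpa using ha
  have hc := (Finset.card_le_card hsub).trans (Finset.card_union_le _ _)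
  have hc' : ((Finset.univ.filter fun k : Fin d → Fin N =>
        t ≤ |∑ i, a i * epsGP N (k i)|).card : ℝ)
      ≤ ((Finset.univ.filter fun k : Fin d → Fin N =>
          t ≤ ∑ i, a i * epsGP N (k i)).card : ℝ)
        + ((Finset.univ.filter fun k : Fin d → Fin N =>
          t ≤ ∑ i, (-a) i * epsGP N (k i)).card : ℝ) := by exact_mod_cast hc
  have hb1 := tail_one hN a ha t ht
  have hb2 := tail_one hN (-a) hna t ht
  linarith

lemma lq_le_max {d : ℕ} (hd : 1 ≤ d) (q q' : ℝ≥0∞) (hq : 1 ≤ q)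
    (hconj : q⁻¹ + q'⁻¹ = 1) (x : Fin d → ℝ) :
    ∃ j, lqNorm q' x ≤ (d : ℝ) ^ (((1 : ℝ≥0∞) - q⁻¹).toReal) * |x j| := by
  have hne : Nonempty (Fin d) := ⟨⟨0, hd⟩⟩
  have hqinv : q⁻¹ ≠ ⊤ := by
    intro h
    rw [h] at hconj
    simp at hconj
  have hinv : q'⁻¹ = 1 - q⁻¹ := by
    rw [← hconj, ENNReal.add_sub_cancel_left hqinv]
  obtain ⟨j, hj⟩ := Finite.exists_max (fun j => |x j|)
  refine ⟨j, ?_⟩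
  have hα : ((1 : ℝ≥0∞) - q⁻¹).toReal = (q'⁻¹).toReal := by rw [hinv]
  rw [hα]
  by_cases hq' : q' = ∞
  · rw [lqNorm, if_pos hq', hq']
    simp only [ENNReal.inv_top, ENNReal.toReal_zero, Real.rpow_zero, one_mul]
    exact ciSup_le hj
  · have hq'0 : q' ≠ 0 := by
      intro h
      rw [h] at hconj
      simp at hconj
    have hp0 : 0 < q'.toReal := ENNReal.toReal_pos hq'0 hq'
    set p := q'.toReal with hp
    rw [lqNorm, if_neg hq']
    have hsum : ∑ j', |x j'| ^ p ≤ (d : ℝ) * |x j| ^ p := by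
      calc ∑ j', |x j'| ^ p ≤ ∑ _j' : Fin d, |x j| ^ p :=
            Finset.sum_le_sum fun j' _ =>
              Real.rpow_le_rpow (abs_nonneg _) (hj j') hp0.le
        _ = (d : ℝ) * |x j| ^ p := by simp [mul_comm]
    have h1 : (∑ j', |x j'| ^ p) ^ (1 / p) ≤ ((d : ℝ) * |x j| ^ p) ^ (1 / p) := by
      apply Real.rpow_le_rpow _ hsum (by positivity)
      apply Finset.sum_nonneg
      intro j' _
      positivity
    refine h1.trans (le_of_eq ?_)
    rw [Real.mul_rpow (by positivity) (by positivity)]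
    rw [ENNReal.toReal_inv, one_div, Real.rpow_rpow_inv (abs_nonneg _) hp0.ne']

lemma gridPoint_eq (n d : ℕ) (O : Matrix (Fin d) (Fin d) ℝ) (k : Fin d → Fin (2 ^ n))
    (j : Fin d) : gridPoint n d O k j = ∑ i, O i j * epsGP (2 ^ n) (k i) := by
  simp [gridPoint, epsGP, Finset.sum_div, mul_div_assoc]


/-- the number of grid points of `ℓ_{q'}`-norm at least
`d^{1−1/q}·√(ln(2d/δ)/2)` is at most `δ·2^{nd}`. -/
theorem approx_radius_of_grid (n d : ℕ) (hn : 1 ≤ n) (hd : 1 ≤ d)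
    (O : Matrix (Fin d) (Fin d) ℝ) (hO : IsOrthogonalMat O)
    (q q' : ℝ≥0∞) (hq : 1 ≤ q) (hconj : q⁻¹ + q'⁻¹ = 1)
    (δ : ℝ) (hδ : 0 < δ) :
    (((rotGrid n d O).filter fun x =>
        (d : ℝ) ^ (((1 : ℝ≥0∞) - q⁻¹).toReal) * Real.sqrt (Real.log (2 * d / δ) / 2)
          ≤ lqNorm q' x).card : ℝ)
      ≤ δ * 2 ^ (n * d) := by
  classical
  set N : ℕ := 2 ^ n with hNdef
  have hN : 0 < N := pow_pos (by norm_num) n -- maybe wrong name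
  set t : ℝ := Real.sqrt (Real.log (2 * d / δ) / 2) with htdef
  have ht : 0 ≤ t := Real.sqrt_nonneg _
  set α : ℝ := ((1 : ℝ≥0∞) - q⁻¹).toReal with hαdef
  have hdR : (0 : ℝ) < d := by exact_mod_cast hd
  have hαpos : (0 : ℝ) < (d : ℝ) ^ α := Real.rpow_pos_of_pos hdR α
  -- columns of O are unit vectors
  have hcol : ∀ j, ∑ i, O i j ^ 2 = 1 := by
    intro j
    have h := congrFun (congrFun hO.1 j) j
    rw [Matrix.mul_apply, Matrix.one_apply_eq] at h
    rw [← h]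
    exact Finset.sum_congr rfl fun i _ => by simp [Matrix.transpose_apply, sq]
  -- step 1 : card bound through index space
  have step1 : (((rotGrid n d O).filter fun x => (d : ℝ) ^ α * t ≤ lqNorm q' x).card : ℝ)
      ≤ ∑ j : Fin d, ((Finset.univ.filter fun k : Fin d → Fin N =>
          t ≤ |∑ i, O i j * epsGP N (k i)|).card : ℝ) := by
    have h1 : ((rotGrid n d O).filter fun x => (d : ℝ) ^ α * t ≤ lqNorm q' x).card
        ≤ (Finset.univ.filter fun k : Fin d → Fin N =>
            (d : ℝ) ^ α * t ≤ lqNorm q' (gridPoint n d O k)).card := by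
      rw [rotGrid, Finset.filter_image]
      exact Finset.card_image_le
    have h2 : (Finset.univ.filter fun k : Fin d → Fin N =>
            (d : ℝ) ^ α * t ≤ lqNorm q' (gridPoint n d O k))
        ⊆ Finset.univ.biUnion fun j : Fin d =>
            Finset.univ.filter fun k : Fin d → Fin N =>
              t ≤ |∑ i, O i j * epsGP N (k i)| := by
      intro k hk
      rw [Finset.mem_filter] at hk
      obtain ⟨j, hj⟩ := lq_le_max hd q q' hq hconj (gridPoint n d O k)
      have h3 : (d : ℝ) ^ α * t ≤ (d : ℝ) ^ α * |gridPoint n d O k j| := hk.2.trans hj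
      have h4 : t ≤ |gridPoint n d O k j| := le_of_mul_le_mul_left h3 hαpos
      rw [gridPoint_eq] at h4
      exact Finset.mem_biUnion.2 ⟨j, Finset.mem_univ _,
        Finset.mem_filter.2 ⟨Finset.mem_univ _, h4⟩⟩
    calc (((rotGrid n d O).filter fun x => (d : ℝ) ^ α * t ≤ lqNorm q' x).card : ℝ)
        ≤ ((Finset.univ.biUnion fun j : Fin d =>
            Finset.univ.filter fun k : Fin d → Fin N =>
              t ≤ |∑ i, O i j * epsGP N (k i)|).card : ℝ) := by
          exact_mod_cast h1.trans (Finset.card_le_card h2)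
      _ ≤ ∑ j : Fin d, ((Finset.univ.filter fun k : Fin d → Fin N =>
            t ≤ |∑ i, O i j * epsGP N (k i)|).card : ℝ) := by
          exact_mod_cast Finset.card_biUnion_le
  have step2 : (((rotGrid n d O).filter fun x => (d : ℝ) ^ α * t ≤ lqNorm q' x).card : ℝ)
      ≤ (d : ℝ) * (2 * (N : ℝ) ^ d * Real.exp (-2 * t ^ 2)) := by
    refine step1.trans ?_
    calc ∑ j : Fin d, ((Finset.univ.filter fun k : Fin d → Fin N =>
          t ≤ |∑ i, O i j * epsGP N (k i)|).card : ℝ)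
        ≤ ∑ _j : Fin d, (2 * (N : ℝ) ^ d * Real.exp (-2 * t ^ 2)) := by
          refine Finset.sum_le_sum fun j _ => ?_
          exact tail_abs hN (fun i => O i j) (le_of_eq (hcol j)) t ht
      _ = (d : ℝ) * (2 * (N : ℝ) ^ d * Real.exp (-2 * t ^ 2)) := by simp [mul_comm]
  have hNpow : ((N : ℝ)) ^ d = (2 : ℝ) ^ (n * d) := by
    rw [hNdef, pow_mul]
    push_cast
    ring
  by_cases hL : 0 ≤ Real.log (2 * d / δ)
  · have ht2 : t ^ 2 = Real.log (2 * d / δ) / 2 := Real.sq_sqrt (by linarith)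
    have hexp : Real.exp (-2 * t ^ 2) = δ / (2 * d) := by
      rw [ht2]
      have h2d : (0 : ℝ) < 2 * d / δ := by positivity
      rw [show -2 * (Real.log (2 * d / δ) / 2) = -Real.log (2 * d / δ) by ring,
        Real.exp_neg, Real.exp_log h2d]
      rw [inv_div]
    refine step2.trans ?_
    rw [hexp, hNpow]
    rw [show (d : ℝ) * (2 * (2:ℝ) ^ (n*d) * (δ / (2 * d))) = δ * 2 ^ (n*d) by
      field_simp]
  · -- log < 0 : δ > 2d, trivial bound
    push_neg at hL
    have h2d : (0 : ℝ) < 2 * d / δ := by positivity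
    have : 2 * (d:ℝ) / δ < 1 := (Real.log_neg_iff h2d).1 hL
    have hδ2d : 2 * (d:ℝ) < δ := by
      rwa [div_lt_one hδ] at this
    have hcard : (((rotGrid n d O).filter fun x => (d : ℝ) ^ α * t ≤ lqNorm q' x).card : ℝ)
        ≤ (N : ℝ) ^ d := by
      have h1 : ((rotGrid n d O).filter fun x => (d : ℝ) ^ α * t ≤ lqNorm q' x).card
          ≤ (rotGrid n d O).card := Finset.card_filter_le _ _
      have h2 : (rotGrid n d O).card ≤ N ^ d := by
        refine (Finset.card_image_le).trans ?_
        rw [Finset.card_univ]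
        simp [Fintype.card_fun]
        exact le_rfl
      calc (((rotGrid n d O).filter fun x => (d : ℝ) ^ α * t ≤ lqNorm q' x).card : ℝ)
          ≤ ((N ^ d : ℕ) : ℝ) := by exact_mod_cast h1.trans h2
        _ = (N : ℝ) ^ d := by push_cast; ring
    refine hcard.trans ?_
    rw [hNpow]
    have h1d : (1 : ℝ) ≤ d := by exact_mod_cast hd
    nlinarith [pow_pos (show (0:ℝ) < 2 by norm_num) (n * d)]
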